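/- Let I ⊆ P be a monomial ideal (an ideal generated by monomials), let O(I) be the set of exponent vectors t such that X^t ∉ I, and let Φ be a linear shift of P, i.e. the K-algebra homomorphism with Φ(xᵢ) = aᵢxᵢ + bᵢ, aᵢ ∈ K ∖ {0}, bᵢ ∈ K. Then the image ideal Φ(I) = Ideal.map Φ I has GFan number 1, the residue classes of the monomials X^t, t ∈ O(I), form a K-vector-space basis of P/Φ(I), and any order ideal whose monomial residue classes form a K-basis of P/Φ(I) equals O(I). -/

import Mathlib

open MvPolynomial

/-- The leading monomial (σ-largest exponent vector in the support) of a polynomial. -/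
noncomputable def leadMonomial {n : ℕ} {K : Type*} [Field K]
    (m : MonomialOrder (Fin n)) (f : MvPolynomial (Fin n) K) : Fin n →₀ ℕ :=
  m.toSyn.symm (f.support.sup fun s => m.toSyn s)

/-- The leading term ideal of an ideal. -/
noncomputable def leadTermIdeal {n : ℕ} {K : Type*} [Field K]
    (m : MonomialOrder (Fin n)) (I : Ideal (MvPolynomial (Fin n) K)) :
    Ideal (MvPolynomial (Fin n) K) :=
  Ideal.span {g | ∃ f ∈ I, f ≠ 0 ∧ g = monomial (leadMonomial m f) (1 : K)}

set_option maxHeartbeats 1000000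

namespace LinShiftAux

variable {n : ℕ} {K : Type*} [Field K]

lemma toSyn_lm (m : MonomialOrder (Fin n)) (f : MvPolynomial (Fin n) K) :
    m.toSyn (leadMonomial m f) = f.support.sup fun s => m.toSyn s :=
  m.toSyn.apply_symm_apply _

lemma lm_mem {m : MonomialOrder (Fin n)} {f : MvPolynomial (Fin n) K} (hf : f ≠ 0) :
    leadMonomial m f ∈ f.support := by
  obtain ⟨t, ht, hts⟩ := Finset.exists_mem_eq_sup f.support (support_nonempty.mpr hf)
    (fun s => m.toSyn s)
  have : leadMonomial m f = t := by rw [leadMonomial, hts, AddEquiv.symm_apply_apply]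
  rwa [this]

lemma le_lm {m : MonomialOrder (Fin n)} {f : MvPolynomial (Fin n) K} {t : Fin n →₀ ℕ}
    (ht : t ∈ f.support) : m.toSyn t ≤ m.toSyn (leadMonomial m f) := by
  rw [toSyn_lm]; exact Finset.le_sup ht

lemma lm_monomial {m : MonomialOrder (Fin n)} {t : Fin n →₀ ℕ} {c : K} (hc : c ≠ 0) :
    leadMonomial m (monomial t c) = t := by
  classical
  rw [leadMonomial, support_monomial, if_neg hc, Finset.sup_singleton,
    AddEquiv.symm_apply_apply]

variable (a b : Fin n → K)

lemma supp_lin (i : Fin n) :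
    ∀ u ∈ ((C (a i) * X i + C (b i)) : MvPolynomial (Fin n) K).support,
      u ≤ Finsupp.single i 1 := by
  intro u hu
  rw [mem_support_iff] at hu
  by_cases h1 : u = Finsupp.single i 1
  · exact le_of_eq h1
  · by_cases h0 : u = 0
    · subst h0; exact zero_le
    · exfalso; apply hu
      rw [coeff_add, coeff_C_mul, coeff_X', if_neg (Ne.symm h1), coeff_C,
        if_neg (fun h => h0 h.symm)]
      ring

lemma supp_pow (i : Fin n) (k : ℕ) :
    ∀ u ∈ (((C (a i) * X i + C (b i)) : MvPolynomial (Fin n) K) ^ k).support,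
      u ≤ Finsupp.single i k := by
  induction k with
  | zero =>
    intro u hu
    rw [pow_zero, mem_support_iff, coeff_one] at hu
    have : u = 0 := by by_contra h; exact hu (if_neg (fun h' => h h'.symm))
    subst this; simp
  | succ k ih =>
    intro u hu
    rw [pow_succ] at hu
    obtain ⟨x, hx, y, hy, rfl⟩ := Finset.mem_add.mp (support_mul _ _ hu)
    have : Finsupp.single i (k + 1) = Finsupp.single i k + Finsupp.single i 1 := by
      rw [← Finsupp.single_add]
    rw [this]
    exact add_le_add (ih x hx) (supp_lin a b i y hy)


lemma coeff_mul_of_le {p q : MvPolynomial (Fin n) K} {u v : Fin n →₀ ℕ}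
    (hp : ∀ x ∈ p.support, x ≤ u) (hq : ∀ y ∈ q.support, y ≤ v) :
    coeff (u + v) (p * q) = coeff u p * coeff v q := by
  classical
  rw [coeff_mul]
  have hmem : ((u, v) : (Fin n →₀ ℕ) × (Fin n →₀ ℕ)) ∈ Finset.HasAntidiagonal.antidiagonal (u + v) :=
    Finset.HasAntidiagonal.mem_antidiagonal.mpr rfl
  apply Finset.sum_eq_single_of_mem (u, v) hmem
  rintro ⟨x, y⟩ hxy hne
  rw [Finset.HasAntidiagonal.mem_antidiagonal] at hxy
  by_cases hx : x ∈ p.support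
  · by_cases hy : y ∈ q.support
    · exfalso
      apply hne
      have hxu := hp x hx
      have hyv := hq y hy
      have hx' : x = u := by
        ext j
        have h1 : x j ≤ u j := hxu j
        have h2 : y j ≤ v j := hyv j
        have h3 : x j + y j = u j + v j := by
          have := DFunLike.congr_fun hxy j
          simpa using this
        omega
      subst hx'
      have hy' : y = v := add_left_cancel hxy
      rw [hy']
    · rw [notMem_support_iff.mp hy, mul_zero]
  · rw [notMem_support_iff.mp hx, zero_mul]

lemma coeff_pow_single (i : Fin n) (k : ℕ) :
    coeff (Finsupp.single i k) (((C (a i) * X i + C (b i)) : MvPolynomial (Fin n) K) ^ k)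
      = a i ^ k := by
  induction k with
  | zero => simp
  | succ k ih =>
    rw [pow_succ, mul_add, ← mul_assoc]
    have hsingle : Finsupp.single i (k + 1) = Finsupp.single i k + Finsupp.single i 1 := by
      rw [← Finsupp.single_add]
    rw [coeff_add, hsingle, coeff_mul_X]
    have h2 : coeff (Finsupp.single i k + Finsupp.single i 1)
        ((((C (a i) * X i + C (b i)) : MvPolynomial (Fin n) K) ^ k) * C (b i)) = 0 := by
      rw [mul_comm, coeff_C_mul]
      have : Finsupp.single i k + Finsupp.single i 1 ∉
          ((((C (a i) * X i + C (b i)) : MvPolynomial (Fin n) K) ^ k)).support := by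
        intro h
        have := supp_pow a b i k _ h
        have := this i
        simp at this
      rw [notMem_support_iff.mp this, mul_zero]
    rw [h2, add_zero, mul_comm _ (C (a i)), coeff_C_mul, ih, pow_succ]
    ring


variable {Φ : MvPolynomial (Fin n) K →ₐ[K] MvPolynomial (Fin n) K}

lemma phi_C (hΦ : ∀ i, Φ (X i) = C (a i) * X i + C (b i)) (c : K) : Φ (C c) = C c := by
  rw [← algebraMap_eq]; exact Φ.commutes c

lemma phi_monomial (hΦ : ∀ i, Φ (X i) = C (a i) * X i + C (b i))
    (i : Fin n) (k : ℕ) (t : Fin n →₀ ℕ) (c : K) :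
    Φ (monomial (Finsupp.single i k + t) c)
      = ((C (a i) * X i + C (b i)) : MvPolynomial (Fin n) K) ^ k * Φ (monomial t c) := by
  have : monomial (Finsupp.single i k + t) c
      = (X i ^ k : MvPolynomial (Fin n) K) * monomial t c := by
    rw [X_pow_eq_monomial, monomial_mul, one_mul]
  rw [this, map_mul, map_pow, hΦ i]

lemma supp_phi_monomial (hΦ : ∀ i, Φ (X i) = C (a i) * X i + C (b i)) (t : Fin n →₀ ℕ) (c : K) :
    ∀ u ∈ (Φ (monomial t c)).support, u ≤ t := by
  induction t using Finsupp.induction with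
  | zero =>
    intro u hu
    rw [monomial_zero', phi_C a b hΦ, mem_support_iff, coeff_C] at hu
    have : u = 0 := by by_contra h; exact hu (if_neg (fun h' => h h'.symm))
    simp [this]
  | single_add i k t hit hk ih =>
    intro u hu
    rw [phi_monomial a b hΦ] at hu
    obtain ⟨x, hx, y, hy, rfl⟩ := Finset.mem_add.mp (support_mul _ _ hu)
    exact add_le_add (supp_pow a b i k x hx) (ih y hy)

lemma coeff_phi_monomial_self (hΦ : ∀ i, Φ (X i) = C (a i) * X i + C (b i))
    (t : Fin n →₀ ℕ) (c : K) :
    coeff t (Φ (monomial t c)) = c * t.prod (fun i k => a i ^ k) := by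
  induction t using Finsupp.induction with
  | zero =>
    rw [monomial_zero', phi_C a b hΦ, Finsupp.prod_zero_index, mul_one]
    simp
  | single_add i k t hit hk ih =>
    rw [phi_monomial a b hΦ,
      coeff_mul_of_le (supp_pow a b i k) (supp_phi_monomial a b hΦ t c),
      coeff_pow_single a b i k, ih,
      Finsupp.prod_add_index (fun i _ => pow_zero (a i)) (fun i _ k1 k2 => pow_add (a i) k1 k2)]
    have hsingle : (Finsupp.single i k).prod (fun i k => a i ^ k) = a i ^ k :=
      Finsupp.prod_single_index (h := fun i k => a i ^ k) (pow_zero (a i))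
    rw [hsingle]
    ring

lemma prod_pow_ne_zero (ha : ∀ i, a i ≠ 0) (t : Fin n →₀ ℕ) :
    t.prod (fun i k => a i ^ k) ≠ 0 := by
  rw [Finsupp.prod]
  exact Finset.prod_ne_zero_iff.mpr (fun i _ => pow_ne_zero _ (ha i))

lemma supp_phi (hΦ : ∀ i, Φ (X i) = C (a i) * X i + C (b i)) (f : MvPolynomial (Fin n) K) :
    ∀ u ∈ (Φ f).support, ∃ t ∈ f.support, u ≤ t := by
  intro u hu
  classical
  have h2 : Φ f = ∑ t ∈ f.support, Φ (monomial t (coeff t f)) := by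
    conv_lhs => rw [f.as_sum]
    rw [map_sum]
  rw [h2] at hu
  obtain ⟨t, ht, hut⟩ := Finset.mem_biUnion.mp (support_sum hu)
  exact ⟨t, ht, supp_phi_monomial a b hΦ t _ u hut⟩

lemma coeff_lm_phi (hΦ : ∀ i, Φ (X i) = C (a i) * X i + C (b i))
    (m : MonomialOrder (Fin n)) {f : MvPolynomial (Fin n) K} (hf : f ≠ 0) :
    coeff (leadMonomial m f) (Φ f)
      = coeff (leadMonomial m f) f * (leadMonomial m f).prod (fun i k => a i ^ k) := by
  classical
  have h2 : Φ f = ∑ t ∈ f.support, Φ (monomial t (coeff t f)) := by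
    conv_lhs => rw [f.as_sum]
    rw [map_sum]
  rw [h2, coeff_sum]
  rw [Finset.sum_eq_single_of_mem (leadMonomial m f) (lm_mem hf)]
  · exact coeff_phi_monomial_self a b hΦ _ _
  · intro t ht hne
    by_contra hc
    have hle := supp_phi_monomial a b hΦ t (coeff t f) _ (mem_support_iff.mpr hc)
    have h1 : m.toSyn (leadMonomial m f) ≤ m.toSyn t := m.toSyn_monotone hle
    have h2 : m.toSyn t ≤ m.toSyn (leadMonomial m f) := le_lm ht
    exact hne (m.toSyn.injective (le_antisymm h2 h1))

lemma lm_phi (ha : ∀ i, a i ≠ 0) (hΦ : ∀ i, Φ (X i) = C (a i) * X i + C (b i))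
    (m : MonomialOrder (Fin n)) {f : MvPolynomial (Fin n) K} (hf : f ≠ 0) :
    leadMonomial m (Φ f) = leadMonomial m f := by
  have hmem : leadMonomial m f ∈ (Φ f).support := by
    rw [mem_support_iff, coeff_lm_phi a b hΦ m hf]
    exact mul_ne_zero (mem_support_iff.mp (lm_mem hf)) (prod_pow_ne_zero a ha _)
  apply m.toSyn.injective
  rw [toSyn_lm, toSyn_lm]
  apply le_antisymm
  · apply Finset.sup_le
    intro u hu
    obtain ⟨t, ht, hut⟩ := supp_phi a b hΦ f u hu
    exact le_trans (m.toSyn_monotone hut) (Finset.le_sup ht)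
  · rw [← toSyn_lm m f]
    exact Finset.le_sup (f := fun s => m.toSyn s) hmem

lemma phi_bijective (ha : ∀ i, a i ≠ 0) (hΦ : ∀ i, Φ (X i) = C (a i) * X i + C (b i)) :
    Function.Bijective Φ := by
  set Ψ : MvPolynomial (Fin n) K →ₐ[K] MvPolynomial (Fin n) K :=
    aeval (fun i => C (a i)⁻¹ * (X i - C (b i))) with hΨ
  have h1 : Φ.comp Ψ = AlgHom.id K (MvPolynomial (Fin n) K) := by
    apply MvPolynomial.algHom_ext
    intro i
    simp only [AlgHom.comp_apply, hΨ, aeval_X, AlgHom.id_apply]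
    rw [map_mul, map_sub, hΦ i, phi_C a b hΦ, phi_C a b hΦ]
    rw [add_sub_cancel_right, ← mul_assoc, ← C_mul, inv_mul_cancel₀ (ha i), C_1, one_mul]
  have h2 : Ψ.comp Φ = AlgHom.id K (MvPolynomial (Fin n) K) := by
    apply MvPolynomial.algHom_ext
    intro i
    simp only [AlgHom.comp_apply, AlgHom.id_apply]
    rw [hΦ i, map_add, map_mul]
    have hC : ∀ c : K, Ψ (C c) = C c := fun c => by
      rw [← algebraMap_eq]; exact Ψ.commutes c
    rw [hC, hC, hΨ, aeval_X, ← mul_assoc, ← C_mul, mul_inv_cancel₀ (ha i), C_1, one_mul]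
    ring
  constructor
  · intro x y hxy
    have := congrArg Ψ hxy
    calc x = (Ψ.comp Φ) x := by rw [h2]; rfl
    _ = (Ψ.comp Φ) y := this
    _ = y := by rw [h2]; rfl
  · intro y
    exact ⟨Ψ y, by have := DFunLike.congr_fun h1 y; exact this⟩


variable {I : Ideal (MvPolynomial (Fin n) K)} {S : Set (Fin n →₀ ℕ)}

lemma monomial_mem_I (hmono : I = Ideal.span ((fun t => monomial t (1 : K)) '' S))
    {t : Fin n →₀ ℕ} (h : ∃ s ∈ S, s ≤ t) : monomial t (1 : K) ∈ I := by
  rw [hmono]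
  apply mem_ideal_span_monomial_image.mpr
  intro xi hxi
  classical
  rw [support_monomial, if_neg one_ne_zero, Finset.mem_singleton] at hxi
  subst hxi
  exact h

lemma lm_mem_I (hmono : I = Ideal.span ((fun t => monomial t (1 : K)) '' S))
    (ha : ∀ i, a i ≠ 0) (hΦ : ∀ i, Φ (X i) = C (a i) * X i + C (b i))
    (m : MonomialOrder (Fin n)) {f : MvPolynomial (Fin n) K}
    (hf : f ∈ Ideal.map (Φ : MvPolynomial (Fin n) K →+* MvPolynomial (Fin n) K) I)
    (hf0 : f ≠ 0) : monomial (leadMonomial m f) (1 : K) ∈ I := by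
  obtain ⟨g, hgI, rfl⟩ := Ideal.mem_map_iff_of_surjective _ (phi_bijective a b ha hΦ).2 |>.mp hf
  have hg0 : g ≠ 0 := by rintro rfl; exact hf0 (map_zero Φ)
  rw [lm_phi a b ha hΦ m hg0]
  have hmem := lm_mem (m := m) hg0
  have := mem_ideal_span_monomial_image.mp (hmono ▸ hgI) _ hmem
  exact monomial_mem_I hmono this

lemma lt_eq (hmono : I = Ideal.span ((fun t => monomial t (1 : K)) '' S))
    (ha : ∀ i, a i ≠ 0) (hΦ : ∀ i, Φ (X i) = C (a i) * X i + C (b i))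
    (m : MonomialOrder (Fin n)) :
    leadTermIdeal m (Ideal.map (Φ : MvPolynomial (Fin n) K →+* MvPolynomial (Fin n) K) I)
      = I := by
  apply le_antisymm
  · rw [leadTermIdeal]
    apply Ideal.span_le.mpr
    rintro g ⟨f, hf, hf0, rfl⟩
    exact lm_mem_I a b hmono ha hΦ m hf hf0
  · conv_lhs => rw [hmono]
    apply Ideal.span_le.mpr
    rintro g ⟨s, hs, rfl⟩
    apply Ideal.subset_span
    refine ⟨Φ (monomial s 1), Ideal.mem_map_of_mem _ ?_, ?_, ?_⟩
    · exact monomial_mem_I hmono ⟨s, hs, le_refl s⟩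
    · intro h
      have h2 : (monomial s (1:K)) = 0 := by
        apply (phi_bijective a b ha hΦ).1
        rw [h, map_zero]
      rw [monomial_eq_zero] at h2
      exact one_ne_zero h2
    · rw [lm_phi a b ha hΦ m (by simp [monomial_eq_zero]), lm_monomial one_ne_zero]


lemma mk_smul (J : Ideal (MvPolynomial (Fin n) K)) (c : K) (x : MvPolynomial (Fin n) K) :
    Ideal.Quotient.mk J (c • x) = c • Ideal.Quotient.mk J x := by
  rw [← Ideal.Quotient.mkₐ_eq_mk K J]
  exact map_smul (Ideal.Quotient.mkₐ K J) c x

lemma span_top (hmono : I = Ideal.span ((fun t => monomial t (1 : K)) '' S))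
    (ha : ∀ i, a i ≠ 0) (hΦ : ∀ i, Φ (X i) = C (a i) * X i + C (b i)) :
    Submodule.span K (Set.range fun t : {t : Fin n →₀ ℕ // monomial t (1 : K) ∉ I} =>
        Ideal.Quotient.mk (Ideal.map (Φ : MvPolynomial (Fin n) K →+* MvPolynomial (Fin n) K) I)
          (monomial (t : Fin n →₀ ℕ) (1 : K))) = ⊤ := by
  set J := Ideal.map (Φ : MvPolynomial (Fin n) K →+* MvPolynomial (Fin n) K) I with hJ
  set Sp := Submodule.span K (Set.range fun t : {t : Fin n →₀ ℕ // monomial t (1 : K) ∉ I} =>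
      Ideal.Quotient.mk J (monomial (t : Fin n →₀ ℕ) (1 : K))) with hSp
  rw [eq_top_iff]
  intro x _
  obtain ⟨f, rfl⟩ := Ideal.Quotient.mk_surjective x
  set m₀ : MonomialOrder (Fin n) := MonomialOrder.lex with hm₀
  suffices H : ∀ v : m₀.syn, ∀ f : MvPolynomial (Fin n) K,
      (f.support.sup fun s => m₀.toSyn s) = v → Ideal.Quotient.mk J f ∈ Sp from H _ f rfl
  intro v
  induction v using WellFoundedLT.induction with
  | _ v ih =>
  intro f hv
  by_cases hf : f = 0
  · subst hf; simp
  -- the leading exponent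
  set t := leadMonomial m₀ f with hlm
  have hc : coeff t f ≠ 0 := mem_support_iff.mp (lm_mem hf)
  -- general reduction step
  have key : ∀ g : MvPolynomial (Fin n) K,
      (∀ u ∈ g.support, m₀.toSyn u ≤ m₀.toSyn t) →
      coeff t g = coeff t f →
      Ideal.Quotient.mk J (f - g) ∈ Sp := by
    intro g hg hgc
    by_cases hf' : f - g = 0
    · rw [hf']; simp
    · obtain ⟨u, hu, hsup⟩ := Finset.exists_mem_eq_sup _ (support_nonempty.mpr hf')
        (fun s => m₀.toSyn s)
      apply ih ((f - g).support.sup fun s => m₀.toSyn s) ?_ (f - g) rfl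
      rw [hsup, ← hv]
      have hvt : (f.support.sup fun s => m₀.toSyn s) = m₀.toSyn t := (toSyn_lm m₀ f).symm
      rw [hvt]
      have hune : u ≠ t := by
        intro h
        rw [mem_support_iff] at hu
        apply hu
        rw [h, coeff_sub, hgc, sub_self]
      have hule : m₀.toSyn u ≤ m₀.toSyn t := by
        rw [mem_support_iff, coeff_sub] at hu
        by_cases h1 : coeff u f = 0
        · have h2 : coeff u g ≠ 0 := by
            intro h2; apply hu; rw [h1, h2, sub_self]
          exact hg u (mem_support_iff.mpr h2)
        · exact le_lm (mem_support_iff.mpr h1)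
      exact lt_of_le_of_ne hule (fun h => hune (m₀.toSyn.injective h))
  by_cases htI : monomial t (1 : K) ∈ I
  · -- reduce by an element of J
    set d := coeff t f / t.prod (fun i k => a i ^ k) with hd
    set g := Φ (monomial t d) with hgdef
    have hgJ : g ∈ J := by
      apply Ideal.mem_map_of_mem
      have : monomial t d = C d * monomial t (1 : K) := by
        rw [C_mul_monomial, mul_one]
      rw [this]
      exact Ideal.mul_mem_left _ _ htI
    have h1 : Ideal.Quotient.mk J f = Ideal.Quotient.mk J (f - g) := by
      rw [Ideal.Quotient.mk_eq_mk_iff_sub_mem]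
      simpa using hgJ
    rw [h1]
    apply key
    · intro u hu
      exact m₀.toSyn_monotone (supp_phi_monomial a b hΦ t d u hu)
    · rw [hgdef, coeff_phi_monomial_self a b hΦ, hd,
        div_mul_cancel₀ _ (prod_pow_ne_zero a ha t)]
  · -- subtract the leading monomial, which is in the spanning set
    set g := monomial t (coeff t f) with hgdef
    have h1 : Ideal.Quotient.mk J f = Ideal.Quotient.mk J (f - g) + Ideal.Quotient.mk J g := by
      have h2 := RingHom.map_add (Ideal.Quotient.mk J) (f - g) g
      rw [sub_add_cancel] at h2
      exact h2
    rw [h1]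
    apply Submodule.add_mem
    · apply key
      · intro u hu
        classical
        rw [support_monomial, if_neg hc, Finset.mem_singleton] at hu
        rw [hu]
      · rw [hgdef, coeff_monomial, if_pos rfl]
    · have h2 : g = (coeff t f) • monomial t (1 : K) := by
        rw [smul_monomial, smul_eq_mul, mul_one]
      rw [h2, mk_smul]
      apply Submodule.smul_mem
      apply Submodule.subset_span
      exact ⟨⟨t, htI⟩, rfl⟩


lemma indep_of (hmono : I = Ideal.span ((fun t => monomial t (1 : K)) '' S))
    (ha : ∀ i, a i ≠ 0) (hΦ : ∀ i, Φ (X i) = C (a i) * X i + C (b i))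
    (O : Set (Fin n →₀ ℕ)) (hO : ∀ t ∈ O, monomial t (1 : K) ∉ I) :
    LinearIndependent K fun t : O =>
      Ideal.Quotient.mk (Ideal.map (Φ : MvPolynomial (Fin n) K →+* MvPolynomial (Fin n) K) I)
        (monomial (t : Fin n →₀ ℕ) (1 : K)) := by
  classical
  set J := Ideal.map (Φ : MvPolynomial (Fin n) K →+* MvPolynomial (Fin n) K) I with hJ
  rw [linearIndependent_iff']
  intro s g hsum i hi
  by_contra hgi
  set f : MvPolynomial (Fin n) K := ∑ j ∈ s, monomial (j : Fin n →₀ ℕ) (g j) with hf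
  have hcoeff : ∀ j ∈ s, coeff (j : Fin n →₀ ℕ) f = g j := by
    intro j hj
    rw [hf, coeff_sum]
    rw [Finset.sum_eq_single_of_mem j hj]
    · rw [coeff_monomial, if_pos rfl]
    · intro j' _ hne
      rw [coeff_monomial, if_neg (fun h => hne (Subtype.ext h))]
  have hf0 : f ≠ 0 := by
    intro h
    apply hgi
    rw [← hcoeff i hi, h, coeff_zero]
  have hfJ : f ∈ J := by
    rw [← Ideal.Quotient.eq_zero_iff_mem]
    have h1 : Ideal.Quotient.mk J f
        = ∑ j ∈ s, g j • Ideal.Quotient.mk J (monomial (j : Fin n →₀ ℕ) (1 : K)) := by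
      rw [hf, map_sum]
      apply Finset.sum_congr rfl
      intro j _
      rw [show monomial (j : Fin n →₀ ℕ) (g j) = g j • monomial (j : Fin n →₀ ℕ) (1 : K) by
        rw [smul_monomial, smul_eq_mul, mul_one], mk_smul]
    rw [h1, hsum]
  have hlm := lm_mem_I a b hmono ha hΦ MonomialOrder.lex hfJ hf0
  have hlmsupp := lm_mem (m := MonomialOrder.lex) hf0
  rw [hf] at hlmsupp
  obtain ⟨j, hjs, hjval⟩ := Finset.mem_biUnion.mp (support_sum hlmsupp)
  have : leadMonomial MonomialOrder.lex f = (j : Fin n →₀ ℕ) := by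
    by_cases hgj : g j = 0
    · rw [hgj] at hjval; simp at hjval
    · rwa [support_monomial, if_neg hgj, Finset.mem_singleton] at hjval
  rw [this] at hlm
  exact hO _ j.2 hlm

lemma order_ideal_unique (hmono : I = Ideal.span ((fun t => monomial t (1 : K)) '' S))
    (ha : ∀ i, a i ≠ 0) (hΦ : ∀ i, Φ (X i) = C (a i) * X i + C (b i))
    (O : Set (Fin n →₀ ℕ))
    (hOid : ∀ t ∈ O, ∀ s : Fin n →₀ ℕ, s ≤ t → s ∈ O)
    (hLI : LinearIndependent K fun t : O =>
      Ideal.Quotient.mk (Ideal.map (Φ : MvPolynomial (Fin n) K →+* MvPolynomial (Fin n) K) I)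
        (monomial (t : Fin n →₀ ℕ) (1 : K)))
    (hSp : Submodule.span K (Set.range fun t : O =>
      Ideal.Quotient.mk (Ideal.map (Φ : MvPolynomial (Fin n) K →+* MvPolynomial (Fin n) K) I)
        (monomial (t : Fin n →₀ ℕ) (1 : K))) = ⊤) :
    O = {t : Fin n →₀ ℕ | monomial t (1 : K) ∉ I} := by
  classical
  set J := Ideal.map (Φ : MvPolynomial (Fin n) K →+* MvPolynomial (Fin n) K) I with hJ
  -- first inclusion : O avoids I
  have hOsub : ∀ t ∈ O, monomial t (1 : K) ∉ I := by
    intro t htO htI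
    set g := Φ (monomial t (1 : K)) with hg
    have hgJ : g ∈ J := Ideal.mem_map_of_mem _ htI
    have hsupp : ∀ u ∈ g.support, u ∈ O := fun u hu =>
      hOid t htO u (supp_phi_monomial a b hΦ t 1 u hu)
    set sf : Finset O := g.support.attach.image
      (fun u => (⟨u.1, hsupp u.1 u.2⟩ : O)) with hsf
    have hrel : ∑ j ∈ sf, coeff (j : Fin n →₀ ℕ) g •
        Ideal.Quotient.mk J (monomial (j : Fin n →₀ ℕ) (1 : K)) = 0 := by
      rw [hsf, Finset.sum_image (by intro x _ y _ h; rw [Subtype.mk.injEq] at h; exact Subtype.ext h)]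
      have h2 : ∑ u ∈ g.support.attach, coeff (u : Fin n →₀ ℕ) g •
          Ideal.Quotient.mk J (monomial (u : Fin n →₀ ℕ) (1 : K))
          = ∑ u ∈ g.support, coeff u g • Ideal.Quotient.mk J (monomial u (1 : K)) :=
        Finset.sum_attach g.support
          (fun u => coeff u g • Ideal.Quotient.mk J (monomial u (1 : K)))
      rw [h2]
      have h3 : ∑ u ∈ g.support, coeff u g • Ideal.Quotient.mk J (monomial u (1 : K))
          = Ideal.Quotient.mk J g := by
        conv_rhs => rw [g.as_sum]
        rw [map_sum]
        apply Finset.sum_congr rfl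
        intro u _
        rw [show monomial u (coeff u g) = coeff u g • monomial u (1 : K) by
          rw [smul_monomial, smul_eq_mul, mul_one], mk_smul]
      rw [h3, Ideal.Quotient.eq_zero_iff_mem]
      exact hgJ
    have hall := linearIndependent_iff'.mp hLI sf
      (fun j => coeff (j : Fin n →₀ ℕ) g) hrel
    have htmem : (⟨t, htO⟩ : O) ∈ sf := by
      rw [hsf, Finset.mem_image]
      have htg : t ∈ g.support := by
        rw [mem_support_iff, hg, coeff_phi_monomial_self a b hΦ, one_mul]
        exact prod_pow_ne_zero a ha t
      exact ⟨⟨t, htg⟩, Finset.mem_attach _ _, rfl⟩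
    have htg0 : coeff t g ≠ 0 := by
      rw [hg, coeff_phi_monomial_self a b hΦ, one_mul]
      exact prod_pow_ne_zero a ha t
    exact htg0 (hall _ htmem)
  apply Set.Subset.antisymm
  · exact fun t ht => hOsub t ht
  · intro t ht
    by_contra htO
    -- t gives an element independent from the O-monomials
    set v : {u : Fin n →₀ ℕ // monomial u (1 : K) ∉ I} → (MvPolynomial (Fin n) K ⧸ J) :=
      fun u => Ideal.Quotient.mk J (monomial (u : Fin n →₀ ℕ) (1 : K)) with hv
    have hvLI : LinearIndependent K v :=
      indep_of a b hmono ha hΦ {u : Fin n →₀ ℕ | monomial u (1 : K) ∉ I} (fun u hu => hu)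
    set sset : Set {u : Fin n →₀ ℕ // monomial u (1 : K) ∉ I} := {j | (j : Fin n →₀ ℕ) ∈ O}
      with hsset
    have hnotmem : (⟨t, ht⟩ : {u : Fin n →₀ ℕ // monomial u (1 : K) ∉ I}) ∉ sset := htO
    have hnot := hvLI.notMem_span_image hnotmem
    apply hnot
    have hsub : Set.range (fun u : O => Ideal.Quotient.mk J (monomial (u : Fin n →₀ ℕ) (1 : K)))
        ⊆ v '' sset := by
      rintro y ⟨u, rfl⟩
      exact ⟨⟨u.1, hOsub u.1 u.2⟩, u.2, rfl⟩
    have : v ⟨t, ht⟩ ∈ Submodule.span K (Set.range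
        (fun u : O => Ideal.Quotient.mk J (monomial (u : Fin n →₀ ℕ) (1 : K)))) := by
      rw [hSp]; trivial
    exact Submodule.span_mono hsub this

end LinShiftAux


/-- For a monomial ideal `I` and a linear shift `Φ`, the image ideal `Φ(I)` has
GFan number 1, the monomials outside `I` give a `K`-basis of `P/Φ(I)`, and this
is the unique order ideal with that property. -/
theorem linear_shift_of_monomial_ideal_unique_basic_set
    {n : ℕ} {K : Type*} [Field K]
    (I : Ideal (MvPolynomial (Fin n) K))
    (S : Set (Fin n →₀ ℕ))
    (hmono : I = Ideal.span ((fun t => monomial t (1 : K)) '' S))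
    (a b : Fin n → K) (ha : ∀ i, a i ≠ 0)
    (Φ : MvPolynomial (Fin n) K →ₐ[K] MvPolynomial (Fin n) K)
    (hΦ : ∀ i, Φ (X i) = C (a i) * X i + C (b i)) :
    (∀ m τ : MonomialOrder (Fin n),
        leadTermIdeal m (Ideal.map (Φ : MvPolynomial (Fin n) K →+* MvPolynomial (Fin n) K) I)
          = leadTermIdeal τ (Ideal.map (Φ : MvPolynomial (Fin n) K →+* MvPolynomial (Fin n) K) I)) ∧
    (LinearIndependent K fun t : {t : Fin n →₀ ℕ // monomial t (1 : K) ∉ I} =>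
        Ideal.Quotient.mk (Ideal.map (Φ : MvPolynomial (Fin n) K →+* MvPolynomial (Fin n) K) I)
          (monomial (t : Fin n →₀ ℕ) (1 : K))) ∧
    (Submodule.span K (Set.range fun t : {t : Fin n →₀ ℕ // monomial t (1 : K) ∉ I} =>
        Ideal.Quotient.mk (Ideal.map (Φ : MvPolynomial (Fin n) K →+* MvPolynomial (Fin n) K) I)
          (monomial (t : Fin n →₀ ℕ) (1 : K))) = ⊤) ∧
    (∀ O : Set (Fin n →₀ ℕ),
        (∀ t ∈ O, ∀ s : Fin n →₀ ℕ, s ≤ t → s ∈ O) →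
        (LinearIndependent K fun t : O =>
          Ideal.Quotient.mk (Ideal.map (Φ : MvPolynomial (Fin n) K →+* MvPolynomial (Fin n) K) I)
            (monomial (t : Fin n →₀ ℕ) (1 : K))) →
        (Submodule.span K (Set.range fun t : O =>
          Ideal.Quotient.mk (Ideal.map (Φ : MvPolynomial (Fin n) K →+* MvPolynomial (Fin n) K) I)
            (monomial (t : Fin n →₀ ℕ) (1 : K))) = ⊤) →
        O = {t : Fin n →₀ ℕ | monomial t (1 : K) ∉ I}) := by
  refine ⟨?_, ?_, ?_, ?_⟩
  · intro m τ
    rw [LinShiftAux.lt_eq a b hmono ha hΦ m, LinShiftAux.lt_eq a b hmono ha hΦ τ]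
  · exact LinShiftAux.indep_of a b hmono ha hΦ
      {t : Fin n →₀ ℕ | monomial t (1 : K) ∉ I} (fun t ht => ht)
  · exact LinShiftAux.span_top a b hmono ha hΦ
  · intro O hOid hLI hSp
    exact LinShiftAux.order_ideal_unique a b hmono ha hΦ O hOid hLI hSp
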